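/- Let CC' be a two-column HHL filling and let (p<q) be a legal transposition of left-column entries with p in a row strictly above q's row, i.e. r(p) < r(q). Then inv((p<q)CC') = inv(CC') + N_{p,q}[C'_{>r(p)} ∩ C'_{<r(q)}], where N_{p,q}[S] counts entries k of S with p < k < q, and C'_{>r(p)} ∩ C'_{<r(q)} is the set of entries of C' lying strictly below row r(p) and strictly above row r(q). -/
import Mathlib


/-- Two-column HHL filling condition. -/
def HHL2 (c c' : ℕ) (C : Fin c → ℕ) (C' : Fin c' → ℕ) : Prop :=
  Function.Injective C ∧ Function.Injective C' ∧
  (∀ (i : Fin c) (k : Fin c'), (k : ℕ) < (i : ℕ) → C i ≠ C' k) ∧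
  (∀ (i : Fin c) (h : (i : ℕ) < c'), C i ≤ C' ⟨i, h⟩)

/-- Row `i` is a pivot row of the two-column configuration `CC'`:
either the left entry is strictly smaller than the right entry, or the row
lies below the bottom of the right column. -/
def PivotRow (c c' : ℕ) (C : Fin c → ℕ) (C' : Fin c' → ℕ) (i : Fin c) : Prop :=
  c' ≤ (i : ℕ) ∨ ∃ h : (i : ℕ) < c', C i < C' ⟨i, h⟩

/-- The set of pivot entries of the left column. -/
def pivotEntries (c c' : ℕ) (C : Fin c → ℕ) (C' : Fin c' → ℕ) : Set ℕ :=
  {x | ∃ i : Fin c, PivotRow c c' C C' i ∧ C i = x}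

/-- Failure of the Non-overlapping Condition: two distinct pivot rows whose
pivot intervals `[b_j, d_j]` (with `d_j = ∞` when the right entry is absent)
intersect. -/
def Overlap (c c' : ℕ) (C : Fin c → ℕ) (C' : Fin c' → ℕ) : Prop :=
  ∃ i j : Fin c, i ≠ j ∧ PivotRow c c' C C' i ∧ PivotRow c c' C C' j ∧
    ∃ z : ℕ, C i ≤ z ∧ (∀ h : (i : ℕ) < c', z ≤ C' ⟨i, h⟩) ∧
      C j ≤ z ∧ (∀ h : (j : ℕ) < c', z ≤ C' ⟨j, h⟩)

/-- HHL inversion statistic of a two-column filling `CC'`: pairs of cells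
`u = (j,1)`, `v = (i,2)` with `i < j`, `C(j) < C'(i)`, and `C'(i) < C'(j)`
whenever row `j` has a right entry. -/
noncomputable def inv2 (c c' : ℕ) (C : Fin c → ℕ) (C' : Fin c' → ℕ) : ℕ :=
  Set.ncard {p : Fin c' × Fin c | (p.1 : ℕ) < (p.2 : ℕ) ∧ C p.2 < C' p.1 ∧
    ∀ h : (p.2 : ℕ) < c', C' p.1 < C' ⟨(p.2 : ℕ), h⟩}

/-- Auxiliary: the inversion set. -/
def invSet (c c' : ℕ) (C : Fin c → ℕ) (C' : Fin c' → ℕ) : Set (Fin c' × Fin c) :=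
  {p : Fin c' × Fin c | (p.1 : ℕ) < (p.2 : ℕ) ∧ C p.2 < C' p.1 ∧
    ∀ h : (p.2 : ℕ) < c', C' p.1 < C' ⟨(p.2 : ℕ), h⟩}

/-- Auxiliary: inversions contributed by a single left-column row `j` with value `v`. -/
def rowSet (c c' : ℕ) (C' : Fin c' → ℕ) (j : Fin c) (v : ℕ) : Set (Fin c') :=
  {k : Fin c' | (k : ℕ) < (j : ℕ) ∧ v < C' k ∧ ∀ h : (j : ℕ) < c', C' k < C' ⟨(j : ℕ), h⟩}

lemma inv2_eq_invSet (c c' : ℕ) (C : Fin c → ℕ) (C' : Fin c' → ℕ) :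
    inv2 c c' C C' = (invSet c c' C C').ncard := rfl

lemma inv2_decomp (c c' : ℕ) (C : Fin c → ℕ) (C' : Fin c' → ℕ) (i₁ i₂ : Fin c)
    (h12 : i₁ ≠ i₂) :
    inv2 c c' C C'
      = (invSet c c' C C' ∩ {x | x.2 ≠ i₁ ∧ x.2 ≠ i₂}).ncard
        + (rowSet c c' C' i₁ (C i₁)).ncard + (rowSet c c' C' i₂ (C i₂)).ncard := by
  have himg : ∀ j : Fin c, (invSet c c' C C' ∩ {x | x.2 = j})
      = (fun k => (k, j)) '' rowSet c c' C' j (C j) := by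
    intro j
    ext ⟨k, j'⟩
    simp only [invSet, rowSet, Set.mem_inter_iff, Set.mem_setOf_eq, Set.mem_image,
      Prod.mk.injEq]
    constructor
    · rintro ⟨⟨h1, h2, h3⟩, rfl⟩
      exact ⟨k, ⟨h1, h2, h3⟩, rfl, rfl⟩
    · rintro ⟨k', ⟨h1, h2, h3⟩, rfl, rfl⟩
      exact ⟨⟨h1, h2, h3⟩, rfl⟩
  have hpart : invSet c c' C C'
      = (invSet c c' C C' ∩ {x | x.2 ≠ i₁ ∧ x.2 ≠ i₂})
        ∪ ((invSet c c' C C' ∩ {x | x.2 = i₁}) ∪ (invSet c c' C C' ∩ {x | x.2 = i₂})) := by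
    ext x
    simp only [Set.mem_union, Set.mem_inter_iff, Set.mem_setOf_eq]
    by_cases h1 : x.2 = i₁ <;> by_cases h2 : x.2 = i₂ <;> tauto
  have hd1 : Disjoint (invSet c c' C C' ∩ {x | x.2 ≠ i₁ ∧ x.2 ≠ i₂})
      ((invSet c c' C C' ∩ {x | x.2 = i₁}) ∪ (invSet c c' C C' ∩ {x | x.2 = i₂})) := by
    rw [Set.disjoint_left]
    rintro x ⟨-, hne1, hne2⟩ (⟨-, h⟩ | ⟨-, h⟩) <;> [exact hne1 h; exact hne2 h]
  have hd2 : Disjoint (invSet c c' C C' ∩ {x | x.2 = i₁}) (invSet c c' C C' ∩ {x | x.2 = i₂}) := by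
    rw [Set.disjoint_left]
    rintro x ⟨-, h1⟩ ⟨-, h2⟩
    exact h12 (h1 ▸ h2 ▸ rfl)
  have hinj : ∀ j : Fin c, Function.Injective (fun k : Fin c' => (k, j)) := by
    intro j a b hab
    simpa using congrArg Prod.fst hab
  rw [inv2_eq_invSet]
  conv_lhs => rw [hpart]
  rw [Set.ncard_union_eq hd1 (Set.toFinite _) (Set.toFinite _),
    Set.ncard_union_eq hd2 (Set.toFinite _) (Set.toFinite _),
    himg i₁, himg i₂, Set.ncard_image_of_injective _ (hinj i₁),
    Set.ncard_image_of_injective _ (hinj i₂)]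
  ring

lemma row_count (c c' : ℕ) (C' : Fin c' → ℕ) (i₁ i₂ : Fin c) (hrow : i₁ < i₂)
    (p q : ℕ) (hpq : p < q)
    (hq1 : ∀ h : (i₁ : ℕ) < c', q ≤ C' ⟨(i₁ : ℕ), h⟩)
    (hq2 : ∀ h : (i₂ : ℕ) < c', q ≤ C' ⟨(i₂ : ℕ), h⟩)
    (hne : ∀ k : Fin c', (k : ℕ) < (i₂ : ℕ) → C' k ≠ q) :
    (rowSet c c' C' i₁ q).ncard + (rowSet c c' C' i₂ p).ncard
      = (rowSet c c' C' i₁ p).ncard + (rowSet c c' C' i₂ q).ncard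
        + ({k : Fin c' | (i₁ : ℕ) < (k : ℕ) ∧ (k : ℕ) < (i₂ : ℕ) ∧
            p < C' k ∧ C' k < q}).ncard := by
  have hrow' : (i₁ : ℕ) < (i₂ : ℕ) := hrow
  set L : Set (Fin c') := {k | (k : ℕ) < (i₁ : ℕ) ∧ p < C' k ∧ C' k < q} with hL
  set G : Set (Fin c') := {k | (k : ℕ) < (i₂ : ℕ) ∧ p < C' k ∧ C' k < q} with hG
  set T : Set (Fin c') := {k : Fin c' | (i₁ : ℕ) < (k : ℕ) ∧ (k : ℕ) < (i₂ : ℕ) ∧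
            p < C' k ∧ C' k < q} with hT
  have E1 : rowSet c c' C' i₁ p = rowSet c c' C' i₁ q ∪ L := by
    ext k
    simp only [rowSet, hL, Set.mem_union, Set.mem_setOf_eq]
    constructor
    · rintro ⟨h1, h2, h3⟩
      rcases lt_trichotomy (C' k) q with h | h | h
      · exact Or.inr ⟨h1, h2, h⟩
      · exact absurd h (hne k (h1.trans hrow'))
      · exact Or.inl ⟨h1, h, h3⟩
    · rintro (⟨h1, h2, h3⟩ | ⟨h1, h2, h3⟩)
      · exact ⟨h1, hpq.trans h2, h3⟩
      · exact ⟨h1, h2, fun h => lt_of_lt_of_le h3 (hq1 h)⟩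
  have E2 : rowSet c c' C' i₂ p = rowSet c c' C' i₂ q ∪ G := by
    ext k
    simp only [rowSet, hG, Set.mem_union, Set.mem_setOf_eq]
    constructor
    · rintro ⟨h1, h2, h3⟩
      rcases lt_trichotomy (C' k) q with h | h | h
      · exact Or.inr ⟨h1, h2, h⟩
      · exact absurd h (hne k h1)
      · exact Or.inl ⟨h1, h, h3⟩
    · rintro (⟨h1, h2, h3⟩ | ⟨h1, h2, h3⟩)
      · exact ⟨h1, hpq.trans h2, h3⟩
      · exact ⟨h1, h2, fun h => lt_of_lt_of_le h3 (hq2 h)⟩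
  have E3 : G = L ∪ T := by
    ext k
    simp only [hL, hG, hT, Set.mem_union, Set.mem_setOf_eq]
    constructor
    · rintro ⟨h1, h2, h3⟩
      rcases lt_trichotomy (k : ℕ) (i₁ : ℕ) with h | h | h
      · exact Or.inl ⟨h, h2, h3⟩
      · exfalso
        have hlt : (i₁ : ℕ) < c' := h ▸ k.isLt
        have hk : (⟨(i₁ : ℕ), hlt⟩ : Fin c') = k := Fin.ext h.symm
        have := hq1 hlt
        rw [hk] at this
        omega
      · exact Or.inr ⟨h, h1, h2, h3⟩
    · rintro (⟨h1, h2, h3⟩ | ⟨h1, h2, h3, h4⟩)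
      · exact ⟨h1.trans hrow', h2, h3⟩
      · exact ⟨h2, h3, h4⟩
  have d1 : Disjoint (rowSet c c' C' i₁ q) L := by
    rw [Set.disjoint_left]
    rintro k ⟨-, h2, -⟩ ⟨-, -, h3⟩
    omega
  have d2 : Disjoint (rowSet c c' C' i₂ q) G := by
    rw [Set.disjoint_left]
    rintro k ⟨-, h2, -⟩ ⟨-, -, h3⟩
    omega
  have d3 : Disjoint L T := by
    rw [Set.disjoint_left]
    rintro k ⟨h1, -, -⟩ ⟨h2, -, -, -⟩
    omega
  have n1 : (rowSet c c' C' i₁ p).ncard = (rowSet c c' C' i₁ q).ncard + L.ncard := by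
    rw [E1, Set.ncard_union_eq d1 (Set.toFinite _) (Set.toFinite _)]
  have n2 : (rowSet c c' C' i₂ p).ncard = (rowSet c c' C' i₂ q).ncard + G.ncard := by
    rw [E2, Set.ncard_union_eq d2 (Set.toFinite _) (Set.toFinite _)]
  have n3 : G.ncard = L.ncard + T.ncard := by
    rw [E3, Set.ncard_union_eq d3 (Set.toFinite _) (Set.toFinite _)]
  omega

/-- Lemma 4.4: if `(p<q)` is a legal transposition of left-column entries
`p = C i₁ < q = C i₂` with `r(p) < r(q)`, then the inversion statistic grows by
the number of right-column entries strictly between rows `r(p)` and `r(q)` and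
strictly between `p` and `q` in value. -/

theorem inv_change_of_legal_swap (c c' : ℕ) (C : Fin c → ℕ) (C' : Fin c' → ℕ)
    (hC : HHL2 c c' C C') (i₁ i₂ : Fin c) (hrow : i₁ < i₂)
    (hpq : C i₁ < C i₂)
    (hlegal : HHL2 c c' (C ∘ Equiv.swap i₁ i₂) C') :
    inv2 c c' (C ∘ Equiv.swap i₁ i₂) C'
      = inv2 c c' C C' + Set.ncard {k : Fin c' |
          (i₁ : ℕ) < (k : ℕ) ∧ (k : ℕ) < (i₂ : ℕ) ∧
          C i₁ < C' k ∧ C' k < C i₂} := by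
  classical
  obtain ⟨hCinj, hC'inj, hCne, hCle⟩ := hC
  obtain ⟨hDinj, -, hDne, hDle⟩ := hlegal
  have h12 : i₁ ≠ i₂ := ne_of_lt hrow
  have hD1 : (C ∘ Equiv.swap i₁ i₂) i₁ = C i₂ := by
    simp [Equiv.swap_apply_left]
  have hD2 : (C ∘ Equiv.swap i₁ i₂) i₂ = C i₁ := by
    simp [Equiv.swap_apply_right]
  -- the inversion sets away from rows i₁, i₂ coincide
  have hX : invSet c c' (C ∘ Equiv.swap i₁ i₂) C' ∩ {x | x.2 ≠ i₁ ∧ x.2 ≠ i₂}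
      = invSet c c' C C' ∩ {x | x.2 ≠ i₁ ∧ x.2 ≠ i₂} := by
    ext x
    simp only [invSet, Set.mem_inter_iff, Set.mem_setOf_eq]
    have hfix : (C ∘ Equiv.swap i₁ i₂) x.2 = C x.2 ∨ (x.2 = i₁ ∨ x.2 = i₂) := by
      by_cases h1 : x.2 = i₁
      · exact Or.inr (Or.inl h1)
      · by_cases h2 : x.2 = i₂
        · exact Or.inr (Or.inr h2)
        · exact Or.inl (by simp [Equiv.swap_apply_of_ne_of_ne h1 h2])
    constructor
    · rintro ⟨⟨h1, h2, h3⟩, hj1, hj2⟩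
      rcases hfix with hfix | hfix
      · exact ⟨⟨h1, hfix ▸ h2, h3⟩, hj1, hj2⟩
      · tauto
    · rintro ⟨⟨h1, h2, h3⟩, hj1, hj2⟩
      rcases hfix with hfix | hfix
      · exact ⟨⟨h1, hfix ▸ h2, h3⟩, hj1, hj2⟩
      · tauto
  have hq1 : ∀ h : (i₁ : ℕ) < c', C i₂ ≤ C' ⟨(i₁ : ℕ), h⟩ := by
    intro h
    have := hDle i₁ h
    rwa [hD1] at this
  have hq2 : ∀ h : (i₂ : ℕ) < c', C i₂ ≤ C' ⟨(i₂ : ℕ), h⟩ := fun h => hCle i₂ h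
  have hne : ∀ k : Fin c', (k : ℕ) < (i₂ : ℕ) → C' k ≠ C i₂ :=
    fun k hk => (hCne i₂ k hk).symm
  have hrc := row_count c c' C' i₁ i₂ hrow (C i₁) (C i₂) hpq hq1 hq2 hne
  rw [inv2_decomp c c' (C ∘ Equiv.swap i₁ i₂) C' i₁ i₂ h12,
    inv2_decomp c c' C C' i₁ i₂ h12, hX, hD1, hD2]
  omega
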